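/- Conversely, if v belongs to the regular subdifferential of g(z) = ‖z₊‖₀ at y, then v_i = 0 for every i with y_i ≠ 0 and v_i ≥ 0 for every i with y_i = 0. -/

import Mathlib

open Filter EuclideanSpace

-- coordinate bound
lemma coord_abs_le_norm {m : ℕ} (w : EuclideanSpace ℝ (Fin m)) (j : Fin m) :
    |w j| ≤ ‖w‖ := by
  have h1 : (inner ℝ (EuclideanSpace.single j (1:ℝ)) w : ℝ) = w j := by
    rw [EuclideanSpace.inner_single_left]; simp
  calc |w j| = |(inner ℝ (EuclideanSpace.single j (1:ℝ)) w : ℝ)| := by rw [h1]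
    _ ≤ ‖EuclideanSpace.single j (1:ℝ)‖ * ‖w‖ := abs_real_inner_le_norm _ _
    _ = ‖w‖ := by simp

-- the difference quotient is eventually bounded below by -‖v‖
lemma bounded_below (m : ℕ) (y v : EuclideanSpace ℝ (Fin m)) :
    ∀ᶠ z in nhdsWithin y {z | z ≠ y},
      -‖v‖ ≤ ((Nat.card {i : Fin m | 0 < z i} : ℝ) - (Nat.card {i : Fin m | 0 < y i} : ℝ)
          - (inner ℝ v (z - y) : ℝ)) / ‖z - y‖ := by
  have hcoord : ∀ᶠ z in nhds y, ∀ j : Fin m, 0 < y j → 0 < z j := by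
    rw [eventually_all]
    intro j
    by_cases hj : 0 < y j
    · rw [Metric.eventually_nhds_iff]
      refine ⟨y j, hj, fun z hz hyj => ?_⟩
      have := coord_abs_le_norm (z - y) j
      have hd : ‖z - y‖ < y j := by rwa [← dist_eq_norm]
      have : |z j - y j| < y j := lt_of_le_of_lt (by simpa using this) hd
      have := abs_lt.mp this
      linarith [this.1]
    · exact Filter.Eventually.of_forall fun z hz => absurd hz hj
  have h1 : ∀ᶠ z in nhdsWithin y {z | z ≠ y}, (∀ j : Fin m, 0 < y j → 0 < z j) ∧ z ≠ y :=
    ((hcoord.filter_mono nhdsWithin_le_nhds).and (eventually_mem_nhdsWithin))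
  refine h1.mono fun z ⟨hz, hzy⟩ => ?_
  have hnorm : 0 < ‖z - y‖ := by
    rw [norm_pos_iff]; exact sub_ne_zero.mpr hzy
  rw [le_div_iff₀ hnorm]
  have hsub : {i : Fin m | 0 < y i} ⊆ {i : Fin m | 0 < z i} := fun j hj => hz j hj
  have hcard : (Nat.card {i : Fin m | 0 < y i} : ℝ) ≤ (Nat.card {i : Fin m | 0 < z i} : ℝ) := by
    exact_mod_cast Nat.card_mono (Set.toFinite _) hsub
  have hinner : (inner ℝ v (z - y) : ℝ) ≤ ‖v‖ * ‖z - y‖ := real_inner_le_norm v (z - y)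
  nlinarith

-- key: along a sequence y + single i (t n), liminf condition gives 0 ≤ c
lemma key (m : ℕ) (y v : EuclideanSpace ℝ (Fin m))
    (h : 0 ≤ Filter.liminf
      (fun z : EuclideanSpace ℝ (Fin m) =>
        ((Nat.card {i : Fin m | 0 < z i} : ℝ) - (Nat.card {i : Fin m | 0 < y i} : ℝ)
          - (inner ℝ v (z - y) : ℝ)) / ‖z - y‖)
      (nhdsWithin y {z | z ≠ y}))
    (i : Fin m) (t : ℕ → ℝ) (c : ℝ)
    (ht0 : ∀ n, t n ≠ 0)
    (htlim : Filter.Tendsto t Filter.atTop (nhds 0))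
    (hset : ∀ᶠ n in Filter.atTop,
      {j : Fin m | 0 < (y + EuclideanSpace.single i (t n)) j} = {j : Fin m | 0 < y j})
    (hc : ∀ᶠ n in Filter.atTop, -(t n * v i) / |t n| ≤ c) :
    0 ≤ c := by
  set f : EuclideanSpace ℝ (Fin m) → ℝ := fun z =>
    ((Nat.card {i : Fin m | 0 < z i} : ℝ) - (Nat.card {i : Fin m | 0 < y i} : ℝ)
      - (inner ℝ v (z - y) : ℝ)) / ‖z - y‖ with hf
  set u : ℕ → EuclideanSpace ℝ (Fin m) := fun n => y + EuclideanSpace.single i (t n) with hu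
  have husub : ∀ n, u n - y = EuclideanSpace.single i (t n) := fun n => by
    simp [hu]
  have hune : ∀ n, u n ≠ y := by
    intro n hn
    have : EuclideanSpace.single i (t n) = 0 := by
      rw [← husub n, hn, sub_self]
    have := congrArg (fun w => w i) this
    simp at this
    exact ht0 n this
  have hutend : Filter.Tendsto u Filter.atTop (nhdsWithin y {z | z ≠ y}) := by
    rw [tendsto_nhdsWithin_iff]
    constructor
    · have : Filter.Tendsto (fun n => u n - y) Filter.atTop (nhds 0) := by
        refine squeeze_zero_norm (fun n => ?_) (by simpa using htlim.abs)
        rw [husub n]; simp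
      have := this.add_const y
      simpa using this
    · exact Filter.Eventually.of_forall fun n => hune n
  have hfu : ∀ᶠ n in Filter.atTop, f (u n) ≤ c := by
    filter_upwards [hset, hc] with n hs hcn
    have hinner : (inner ℝ v (u n - y) : ℝ) = t n * v i := by
      rw [husub n]
      have := EuclideanSpace.inner_single_right (𝕜 := ℝ) i (t n) v
      simpa [mul_comm] using this
    have hnorm : ‖u n - y‖ = |t n| := by rw [husub n]; simp
    have : f (u n) = -(t n * v i) / |t n| := by
      rw [hf]
      simp only [hu] at hs ⊢
      rw [hs, hinner, hnorm]
      ring_nf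
    rw [this]; exact hcn
  have hfreq : ∃ᶠ z in nhdsWithin y {z | z ≠ y}, f z ≤ c :=
    hutend.frequently hfu.frequently
  have hbdd : (nhdsWithin y {z | z ≠ y}).IsBoundedUnder (· ≥ ·) f :=
    ⟨-‖v‖, bounded_below m y v⟩
  exact le_trans h (Filter.liminf_le_of_frequently_le hfreq hbdd)

lemma set_eq_of {m : ℕ} (y : EuclideanSpace ℝ (Fin m)) (i : Fin m) (t : ℝ)
    (hti : 0 < y i + t ↔ 0 < y i) :
    {j : Fin m | 0 < (y + EuclideanSpace.single i t) j} = {j : Fin m | 0 < y j} := by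
  ext j
  simp only [Set.mem_setOf_eq, PiLp.add_apply, EuclideanSpace.single_apply]
  rcases eq_or_ne j i with rfl | hj
  · simpa using hti
  · simp [hj]

lemma tnat_tendsto : Filter.Tendsto (fun n : ℕ => 1 / ((n : ℝ) + 1)) Filter.atTop (nhds 0) :=
  tendsto_one_div_add_atTop_nhds_zero_nat

theorem stmt_4 (m : ℕ) (y v : EuclideanSpace ℝ (Fin m))
    (h : 0 ≤ Filter.liminf
      (fun z : EuclideanSpace ℝ (Fin m) =>
        ((Nat.card {i : Fin m | 0 < z i} : ℝ) - (Nat.card {i : Fin m | 0 < y i} : ℝ)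
          - (inner ℝ v (z - y) : ℝ)) / ‖z - y‖)
      (nhdsWithin y {z | z ≠ y})) :
    ∀ i, (y i ≠ 0 → v i = 0) ∧ (y i = 0 → 0 ≤ v i) := by
  intro i
  have hpos : ∀ n : ℕ, (0:ℝ) < 1 / ((n : ℝ) + 1) := fun n => by positivity
  -- generic instantiation with sign s
  have main : ∀ s : ℝ, s = 1 ∨ s = -1 →
      (∀ᶠ n : ℕ in Filter.atTop, (0 < y i + s * (1 / ((n:ℝ) + 1)) ↔ 0 < y i)) →
      0 ≤ -s * v i := by
    intro s hs hev
    refine key m y v h i (fun n => s * (1 / ((n:ℝ) + 1))) (-s * v i) ?_ ?_ ?_ ?_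
    · intro n
      have h2 : ((n:ℝ) + 1) ≠ 0 := by positivity
      rcases hs with rfl | rfl <;> simp [h2]
    · simpa using tnat_tendsto.const_mul s
    · filter_upwards [hev] with n hn
      exact set_eq_of y i _ hn
    · refine Filter.Eventually.of_forall fun n : ℕ => le_of_eq ?_
      have h0 := hpos n
      have h2 : ((n:ℝ) + 1) ≠ 0 := by positivity
      have habs : |s| = 1 := by rcases hs with rfl | rfl <;> simp
      show -(s * (1 / ((n:ℝ) + 1)) * v i) / |s * (1 / ((n:ℝ) + 1))| = -s * v i
      rw [abs_mul, habs, one_mul, abs_of_pos h0]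
      field_simp
  constructor
  · intro hyi
    have hsmall : ∀ᶠ n : ℕ in Filter.atTop, 1 / ((n:ℝ) + 1) < |y i| := by
      have := tnat_tendsto
      exact this.eventually_lt_const (abs_pos.mpr hyi) |>.mono fun n hn => hn
    have hev : ∀ s : ℝ, s = 1 ∨ s = -1 →
        ∀ᶠ n : ℕ in Filter.atTop, (0 < y i + s * (1 / ((n:ℝ) + 1)) ↔ 0 < y i) := by
      intro s hs
      filter_upwards [hsmall] with n hn
      have h0 := hpos n
      rcases lt_or_gt_of_ne hyi with hy | hy
      · have habs : |y i| = -(y i) := abs_of_neg hy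
        rcases hs with rfl | rfl <;> constructor <;> intro hh <;> nlinarith
      · have habs : |y i| = y i := abs_of_pos hy
        rcases hs with rfl | rfl <;> constructor <;> intro hh <;> nlinarith
    have h1 := main 1 (Or.inl rfl) (hev 1 (Or.inl rfl))
    have h2 := main (-1) (Or.inr rfl) (hev (-1) (Or.inr rfl))
    simp at h1 h2
    linarith
  · intro hyi
    have h2 := main (-1) (Or.inr rfl) ?_
    · simpa using h2
    · refine Filter.Eventually.of_forall fun n : ℕ => ?_
      have h0 := hpos n
      rw [hyi]
      constructor <;> intro hh <;> [nlinarith; nlinarith]
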